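/- Let G be a finite chordal graph with n vertices and S a clique of G. Then there exists an ordering v₁, …, vₙ of the vertices of G such that {v₁, …, v_k} = V \ S where k = |V \ S|, and for each i, v_i is a simplicial vertex of the induced subgraph of G on {v_i, v_{i+1}, …, vₙ}. -/

import Mathlib

open SimpleGraph Walk


def SimpleGraph.IsSimplicialVertex {V : Type*} (G : SimpleGraph V) (v : V) : Prop :=
  G.IsClique (G.neighborSet v)

/-- adjacency-only characterization of simplicialness in an induced subgraph -/
def PeoSimpAt {V : Type*} (G : SimpleGraph V) (T : Set V) (u : V) : Prop :=
  ∀ x ∈ T, ∀ y ∈ T, G.Adj u x → G.Adj u y → x ≠ y → G.Adj x y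

lemma peo_simplicial_induce_iff {V : Type*} (G : SimpleGraph V) (T : Set V) (u : V)
    (hu : u ∈ T) : (G.induce T).IsSimplicialVertex ⟨u, hu⟩ ↔ PeoSimpAt G T u := by
  constructor
  · intro h x hx y hy hax hay hne
    have := h (show (⟨x, hx⟩ : T) ∈ (G.induce T).neighborSet ⟨u, hu⟩ by simpa using hax)
      (show (⟨y, hy⟩ : T) ∈ (G.induce T).neighborSet ⟨u, hu⟩ by simpa using hay)
      (by simp [Subtype.ext_iff, hne])
    simpa using this
  · intro h x hx y hy hne
    have hax : G.Adj u x.1 := by simpa using hx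
    have hay : G.Adj u y.1 := by simpa using hy
    have : x.1 ≠ y.1 := fun hh => hne (Subtype.ext hh)
    simpa using h x.1 x.2 y.1 y.2 hax hay this


def SimpleGraph.IsChordal {V : Type*} (G : SimpleGraph V) : Prop :=
  ∀ (v : V) (w : G.Walk v v), w.IsCycle → 4 ≤ w.length →
    ∃ a b, a ∈ w.support ∧ b ∈ w.support ∧ G.Adj a b ∧ s(a, b) ∉ w.edges

lemma peo_chordal_induce {V : Type*} {G : SimpleGraph V} (hG : G.IsChordal) (s : Set V) :
    (G.induce s).IsChordal := by
  intro v w hc hl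
  have emb := SimpleGraph.Embedding.induce (G := G) s
  have hinj : Function.Injective emb := emb.injective
  have hc' : (w.map emb.toHom).IsCycle := hc.map hinj
  have hl' : 4 ≤ (w.map emb.toHom).length := by rwa [Walk.length_map]
  obtain ⟨a, b, ha, hb, hadj, hne⟩ := hG _ (w.map emb.toHom) hc' hl'
  rw [Walk.support_map, List.mem_map] at ha hb
  obtain ⟨a', ha', rfl⟩ := ha
  obtain ⟨b', hb', rfl⟩ := hb
  refine ⟨a', b', ha', hb', ?_, ?_⟩
  · exact emb.map_rel_iff.mp hadj
  · intro hmem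
    apply hne
    rw [Walk.edges_map]
    exact List.mem_map.mpr ⟨s(a', b'), hmem, by simp⟩

lemma peo_edge_of_short_walk {V : Type*} {G : SimpleGraph V} {u v : V} (r : G.Walk u v)
    (h1 : r.length ≤ 1) (hne : u ≠ v) : s(u, v) ∈ r.edges := by
  cases r with
  | nil => exact absurd rfl hne
  | cons h r' =>
    rename_i m
    have h0 : r'.length = 0 := by simpa using h1
    have : m = v := Walk.eq_of_length_eq_zero h0
    subst this
    simp

lemma peo_exists_min_walk {V : Type*} {G : SimpleGraph V} {x y : V} (T : Set V)
    (w0 : G.Walk x y) (h0 : ∀ z ∈ w0.support, z ∈ T) :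
    ∃ p : G.Walk x y, p.IsPath ∧ (∀ z ∈ p.support, z ∈ T) ∧
      ∀ q : G.Walk x y, (∀ z ∈ q.support, z ∈ T) → p.length ≤ q.length := by
  classical
  have hP : ∃ k, ∃ q : G.Walk x y, (∀ z ∈ q.support, z ∈ T) ∧ q.length = k :=
    ⟨w0.length, w0, h0, rfl⟩
  obtain ⟨q, hq, hqk⟩ := Nat.find_spec hP
  refine ⟨q.bypass, q.bypass_isPath, fun z hz => hq z (q.support_bypass_subset hz), ?_⟩
  intro q' hq'
  calc q.bypass.length ≤ q.length := q.length_bypass_le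
    _ ≤ q'.length := by
        rw [hqk]
        exact Nat.find_min' hP ⟨q', hq', rfl⟩
lemma peo_shortcut {V : Type*} {G : SimpleGraph V} {x y : V} (T : Set V) (p : G.Walk x y)
    (hsup : ∀ z ∈ p.support, z ∈ T)
    (hmin : ∀ q : G.Walk x y, (∀ z ∈ q.support, z ∈ T) → p.length ≤ q.length)
    {u v : V} (hu : u ∈ p.support) (hv : v ∈ p.support) (huv : G.Adj u v) :
    s(u, v) ∈ p.edges := by
  classical
  have hspec := p.take_spec hu
  set t := p.takeUntil u hu with ht
  set r := p.dropUntil u hu with hr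
  have hlen : t.length + r.length = p.length := by
    rw [← Walk.length_append, hspec]
  have hrsup : ∀ z ∈ r.support, z ∈ T := fun z hz => hsup z (p.support_dropUntil_subset hu hz)
  have htsup : ∀ z ∈ t.support, z ∈ T := fun z hz => hsup z (p.support_takeUntil_subset hu hz)
  by_cases hvr : v ∈ r.support
  · -- v occurs after u
    have hrspec := r.take_spec hvr
    set r1 := r.takeUntil v hvr with hr1
    set r2 := r.dropUntil v hvr with hr2
    have hrlen : r1.length + r2.length = r.length := by
      rw [← Walk.length_append, hrspec]
    have hq : ∀ z ∈ (t.append (Walk.cons huv r2)).support, z ∈ T := by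
      intro z hz
      rw [Walk.mem_support_append_iff] at hz
      rcases hz with hz | hz
      · exact htsup z hz
      · rw [Walk.support_cons] at hz
        rcases List.mem_cons.mp hz with rfl | hz
        · exact hsup _ hu
        · exact hrsup z (r.support_dropUntil_subset hvr hz)
    have := hmin _ hq
    rw [Walk.length_append, Walk.length_cons] at this
    have h1 : r1.length ≤ 1 := by omega
    have : s(u, v) ∈ r1.edges := peo_edge_of_short_walk r1 h1 huv.ne
    exact p.edges_dropUntil_subset hu (r.edges_takeUntil_subset hvr this)
  · -- v occurs before u
    have hvt : v ∈ t.support := by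
      have := hv
      rw [← hspec, Walk.mem_support_append_iff] at this
      tauto
    have htspec := t.take_spec hvt
    set t1 := t.takeUntil v hvt with ht1
    set t2 := t.dropUntil v hvt with ht2
    have htlen : t1.length + t2.length = t.length := by
      rw [← Walk.length_append, htspec]
    have hq : ∀ z ∈ (t1.append (Walk.cons huv.symm r)).support, z ∈ T := by
      intro z hz
      rw [Walk.mem_support_append_iff] at hz
      rcases hz with hz | hz
      · exact htsup z (t.support_takeUntil_subset hvt hz)
      · rw [Walk.support_cons] at hz
        rcases List.mem_cons.mp hz with rfl | hz
        · exact hsup _ hv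
        · exact hrsup z hz
    have := hmin _ hq
    rw [Walk.length_append, Walk.length_cons] at this
    have h1 : t2.length ≤ 1 := by omega
    have : s(v, u) ∈ t2.edges := peo_edge_of_short_walk t2 h1 huv.ne.symm
    have : s(u, v) ∈ t2.edges := by rwa [Sym2.eq_swap] at this
    exact p.edges_takeUntil_subset hu (t.edges_dropUntil_subset hvt this)

lemma peo_cycle_of_two_paths {V : Type*} {G : SimpleGraph V} {x y : V} (hxy : x ≠ y)
    (hnadj : ¬ G.Adj x y) (pA : G.Walk x y) (pB : G.Walk y x)
    (hA : pA.IsPath) (hB : pB.IsPath) (h2A : 2 ≤ pA.length) (h2B : 2 ≤ pB.length)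
    (hint : ∀ z, z ∈ pA.support → z ∈ pB.support → z = x ∨ z = y) :
    (pA.append pB).IsCycle ∧ 4 ≤ (pA.append pB).length := by
  have hlen : (pA.append pB).length = pA.length + pB.length := Walk.length_append _ _
  constructor
  · refine ⟨⟨⟨?_⟩, ?_⟩, ?_⟩
    · -- edges nodup
      rw [Walk.edges_append]
      refine List.Nodup.append hA.edges_nodup hB.edges_nodup ?_
      intro e he1 he2
      induction e with
      | h u v =>
        have hu1 : u ∈ pA.support := pA.fst_mem_support_of_mem_edges he1
        have hv1 : v ∈ pA.support := pA.snd_mem_support_of_mem_edges he1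
        have hu2 : u ∈ pB.support := pB.fst_mem_support_of_mem_edges he2
        have hv2 : v ∈ pB.support := pB.snd_mem_support_of_mem_edges he2
        have hadj : G.Adj u v := pA.adj_of_mem_edges he1
        rcases hint u hu1 hu2 with rfl | rfl <;> rcases hint v hv1 hv2 with rfl | rfl
        · exact hadj.ne rfl
        · exact hnadj hadj
        · exact hnadj hadj.symm
        · exact hadj.ne rfl
    · -- not nil
      intro hnil
      have : (pA.append pB).length = 0 := by rw [hnil]; rfl
      omega
    · -- tail support nodup
      rw [Walk.tail_support_append]
      refine List.Nodup.append (hA.support_nodup.tail) (hB.support_nodup.tail) ?_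
      intro z hz1 hz2
      have hz1' : z ∈ pA.support := by
        rw [pA.support_eq_cons]; exact List.mem_cons_of_mem _ hz1
      have hz2' : z ∈ pB.support := by
        rw [pB.support_eq_cons]; exact List.mem_cons_of_mem _ hz2
      rcases hint z hz1' hz2' with rfl | rfl
      · have : z ∉ pA.support.tail := by
          have := hA.support_nodup
          rw [pA.support_eq_cons] at this
          exact (List.nodup_cons.mp this).1
        exact this hz1
      · have : z ∉ pB.support.tail := by
          have := hB.support_nodup
          rw [pB.support_eq_cons] at this
          exact (List.nodup_cons.mp this).1
        exact this hz2
  · omega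

-- from a walk from c (outside C) to d, passing through x ∈ C and meeting C only at x,
-- extract a neighbor m of x together with a C-avoiding walk from c to m
lemma peo_neighbor_helper {V : Type*} {G : SimpleGraph V} {C : Set V} {c d x : V}
    (w : G.Walk c d) (hc : c ∉ C) (hx : x ∈ C) (hxs : x ∈ w.support)
    (hw : ∀ z ∈ w.support, z ∈ C → z = x) :
    ∃ m, G.Adj x m ∧ ∃ w' : G.Walk c m, ∀ u ∈ w'.support, u ∉ C := by
  classical
  have hcnt : w.support.count x = ((w.takeUntil x hxs).support.count x) +
      ((w.dropUntil x hxs).support.tail.count x) := by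
    conv_lhs => rw [← w.take_spec hxs]
    rw [Walk.support_append, List.count_append]
  set p := w.takeUntil x hxs with hp
  have hcnt1 : p.support.count x = 1 := w.count_support_takeUntil_eq_one hxs
  have hxc : x ≠ c := fun h => hc (h ▸ hx)
  set q := p.reverse with hq
  have hqsup : q.support = p.support.reverse := p.support_reverse
  cases hq2 : q with
  | nil => exact absurd rfl hxc
  | cons h q' =>
    rename_i m
    have hxq' : x ∉ q'.support := by
      have : q.support.count x = 1 := by
        rw [hqsup, List.count_reverse, hcnt1]
      rw [hq2, Walk.support_cons, List.count_cons_self] at this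
      intro hmem
      have := List.count_pos_iff.mpr hmem  -- 0 < count
      omega
    refine ⟨m, h, q'.reverse, ?_⟩
    intro u hu
    rw [Walk.support_reverse, List.mem_reverse] at hu
    intro huC
    have hup : u ∈ p.support := by
      have : u ∈ q.support := by rw [hq2, Walk.support_cons]; exact List.mem_cons_of_mem _ hu
      rw [hqsup, List.mem_reverse] at this
      exact this
    have : u = x := hw u (w.support_takeUntil_subset hxs hup) huC
    exact hxq' (this ▸ hu)
lemma peo_separator {V : Type*} [Fintype V] {G : SimpleGraph V} (hG : G.IsChordal)
    {a b : V} (hab : a ≠ b) (hnadj : ¬ G.Adj a b) :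
    ∃ A B C : Set V, a ∈ A ∧ b ∈ B ∧ (∀ z ∈ A, z ∉ B) ∧ (∀ z ∈ A, z ∉ C) ∧ (∀ z ∈ B, z ∉ C) ∧
      G.IsClique C ∧
      (∀ z ∈ A, ∀ u, G.Adj z u → u ∈ A ∪ C) ∧ (∀ z ∈ B, ∀ u, G.Adj z u → u ∈ B ∪ C) := by
  classical
  set Sep : Set V → Prop := fun C => a ∉ C ∧ b ∉ C ∧ ∀ w : G.Walk a b, ∃ z ∈ w.support, z ∈ C
    with hSep
  have h0 : Sep ({a, b}ᶜ) := by
    refine ⟨by simp, by simp, ?_⟩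
    intro w
    cases w with
    | nil => exact absurd rfl hab
    | cons h p =>
      rename_i c
      refine ⟨c, by simp [Walk.support_cons], ?_⟩
      simp only [Set.mem_compl_iff, Set.mem_insert_iff, Set.mem_singleton_iff]
      push_neg
      exact ⟨fun hc => h.ne' hc, fun hc => hnadj (hc ▸ h)⟩
  have hP : ∃ k, ∃ C, Sep C ∧ Set.ncard C = k := ⟨_, _, h0, rfl⟩
  obtain ⟨C, hC, hCk⟩ := Nat.find_spec hP
  have hminC : ∀ C', Sep C' → Nat.find hP ≤ C'.ncard := fun C' hC' =>
    Nat.find_min' hP ⟨C', hC', rfl⟩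
  have hmin : ∀ x ∈ C, ¬ Sep (C \ {x}) := by
    intro x hx hcontra
    have := hminC _ hcontra
    have hlt : (C \ {x}).ncard < C.ncard := Set.ncard_diff_singleton_lt_of_mem hx (Set.toFinite _)
    omega
  set A : Set V := {z | ∃ w : G.Walk a z, ∀ u ∈ w.support, u ∉ C} with hA
  set B : Set V := {z | ∃ w : G.Walk b z, ∀ u ∈ w.support, u ∉ C} with hB
  have haA : a ∈ A := ⟨Walk.nil, by simpa using hC.1⟩
  have hbB : b ∈ B := ⟨Walk.nil, by simpa using hC.2.1⟩
  have hAC : ∀ z ∈ A, z ∉ C := by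
    rintro z ⟨w, hw⟩
    exact hw z w.end_mem_support
  have hBC : ∀ z ∈ B, z ∉ C := by
    rintro z ⟨w, hw⟩
    exact hw z w.end_mem_support
  have hAB : ∀ z ∈ A, z ∉ B := by
    rintro z ⟨w1, hw1⟩ ⟨w2, hw2⟩
    obtain ⟨u, hu, huC⟩ := hC.2.2 (w1.append w2.reverse)
    rw [Walk.mem_support_append_iff] at hu
    rcases hu with hu | hu
    · exact hw1 u hu huC
    · rw [Walk.support_reverse, List.mem_reverse] at hu
      exact hw2 u hu huC
  have hclosA : ∀ z ∈ A, ∀ u, G.Adj z u → u ∈ A ∪ C := by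
    rintro z ⟨w, hw⟩ u hadj
    by_cases hu : u ∈ C
    · exact Or.inr hu
    · refine Or.inl ⟨w.concat hadj, ?_⟩
      intro t ht
      simp only [Walk.support_concat, List.concat_eq_append, List.mem_append,
        List.mem_singleton] at ht
      rcases ht with ht | rfl
      · exact hw t ht
      · exact hu
  have hclosB : ∀ z ∈ B, ∀ u, G.Adj z u → u ∈ B ∪ C := by
    rintro z ⟨w, hw⟩ u hadj
    by_cases hu : u ∈ C
    · exact Or.inr hu
    · refine Or.inl ⟨w.concat hadj, ?_⟩
      intro t ht
      simp only [Walk.support_concat, List.concat_eq_append, List.mem_append,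
        List.mem_singleton] at ht
      rcases ht with ht | rfl
      · exact hw t ht
      · exact hu
  -- all support vertices of a C-avoiding walk from a are in A
  have hsubA : ∀ (z : V) (w : G.Walk a z), (∀ u ∈ w.support, u ∉ C) →
      ∀ u ∈ w.support, u ∈ A := by
    intro z w hw u hu
    exact ⟨w.takeUntil u hu, fun t ht => hw t (w.support_takeUntil_subset hu ht)⟩
  have hsubB : ∀ (z : V) (w : G.Walk b z), (∀ u ∈ w.support, u ∉ C) →
      ∀ u ∈ w.support, u ∈ B := by
    intro z w hw u hu
    exact ⟨w.takeUntil u hu, fun t ht => hw t (w.support_takeUntil_subset hu ht)⟩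
  -- every x ∈ C has a neighbor in A and in B
  have hnbr : ∀ x ∈ C, (∃ z ∈ A, G.Adj x z) ∧ (∃ z ∈ B, G.Adj x z) := by
    intro x hx
    have h1 := hmin x hx
    rw [hSep] at h1
    have h2 : ¬ ∀ w : G.Walk a b, ∃ z ∈ w.support, z ∈ C \ {x} := by
      intro hall
      exact h1 ⟨fun hc => hC.1 hc.1, fun hc => hC.2.1 hc.1, hall⟩
    push_neg at h2
    obtain ⟨w, hw⟩ := h2
    have hw' : ∀ z ∈ w.support, z ∈ C → z = x := by
      intro z hz hzC
      by_contra hne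
      exact hw z hz ⟨hzC, hne⟩
    have hxs : x ∈ w.support := by
      obtain ⟨z, hz, hzC⟩ := hC.2.2 w
      exact hw' z hz hzC ▸ hz
    constructor
    · obtain ⟨m, hm, w', hw'2⟩ := peo_neighbor_helper w hC.1 hx hxs hw'
      exact ⟨m, ⟨w', hw'2⟩, hm⟩
    · have hxs' : x ∈ w.reverse.support := by rwa [Walk.support_reverse, List.mem_reverse]
      have hw'' : ∀ z ∈ w.reverse.support, z ∈ C → z = x := by
        intro z hz
        rw [Walk.support_reverse, List.mem_reverse] at hz
        exact hw' z hz
      obtain ⟨m, hm, w', hw'2⟩ := peo_neighbor_helper w.reverse hC.2.1 hx hxs' hw''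
      exact ⟨m, ⟨w', hw'2⟩, hm⟩
  -- C is a clique
  have hclq : G.IsClique C := by
    intro x hx y hy hxy
    by_contra hnxy
    obtain ⟨⟨zxA, hzxA, haxA⟩, ⟨zxB, hzxB, haxB⟩⟩ := hnbr x hx
    obtain ⟨⟨zyA, hzyA, hayA⟩, ⟨zyB, hzyB, hayB⟩⟩ := hnbr y hy
    -- connect zxA to zyA within A
    obtain ⟨w1, hw1⟩ := hzxA
    obtain ⟨w2, hw2⟩ := hzyA
    obtain ⟨w3, hw3⟩ := hzxB
    obtain ⟨w4, hw4⟩ := hzyB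
    -- walk x → y with support in {x,y} ∪ A
    have hw0A : ∀ z ∈ ((w1.reverse.append w2).append (Walk.cons hayA.symm Walk.nil)).support,
        z ∈ ({x, y} ∪ A : Set V) := by
      intro z hz
      rw [Walk.mem_support_append_iff] at hz
      rcases hz with hz | hz
      · rw [Walk.mem_support_append_iff] at hz
        rcases hz with hz | hz
        · rw [Walk.support_reverse, List.mem_reverse] at hz
          exact Or.inr (hsubA _ w1 hw1 z hz)
        · exact Or.inr (hsubA _ w2 hw2 z hz)
      · simp only [Walk.support_cons, Walk.support_nil] at hz
        rcases List.mem_cons.mp hz with rfl | hz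
        · exact Or.inr ⟨w2, hw2⟩
        · rcases List.mem_singleton.mp hz with rfl
          exact Or.inl (by simp)
    have hw0B : ∀ z ∈ ((w4.reverse.append w3).append (Walk.cons haxB.symm Walk.nil)).support,
        z ∈ ({x, y} ∪ B : Set V) := by
      intro z hz
      rw [Walk.mem_support_append_iff] at hz
      rcases hz with hz | hz
      · rw [Walk.mem_support_append_iff] at hz
        rcases hz with hz | hz
        · rw [Walk.support_reverse, List.mem_reverse] at hz
          exact Or.inr (hsubB _ w4 hw4 z hz)
        · exact Or.inr (hsubB _ w3 hw3 z hz)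
      · simp only [Walk.support_cons, Walk.support_nil] at hz
        rcases List.mem_cons.mp hz with rfl | hz
        · exact Or.inr ⟨w3, hw3⟩
        · rcases List.mem_singleton.mp hz with rfl
          exact Or.inl (by simp)
    obtain ⟨pA, hpA, hpAsup, hpAmin⟩ := peo_exists_min_walk ({x, y} ∪ A)
      (Walk.cons haxA ((w1.reverse.append w2).append (Walk.cons hayA.symm Walk.nil)))
      (by
        intro z hz
        rw [Walk.support_cons] at hz
        rcases List.mem_cons.mp hz with rfl | hz
        · exact Or.inl (by simp)
        · exact hw0A z hz)
    obtain ⟨pB, hpB, hpBsup, hpBmin⟩ := peo_exists_min_walk ({x, y} ∪ B)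
      (Walk.cons hayB ((w4.reverse.append w3).append (Walk.cons haxB.symm Walk.nil)))
      (by
        intro z hz
        rw [Walk.support_cons] at hz
        rcases List.mem_cons.mp hz with rfl | hz
        · exact Or.inl (by simp)
        · exact hw0B z hz)
    have h2A : 2 ≤ pA.length := by
      by_contra hlt
      push_neg at hlt
      have := peo_edge_of_short_walk pA (by omega) hxy
      exact hnxy (pA.adj_of_mem_edges this)
    have h2B : 2 ≤ pB.length := by
      by_contra hlt
      push_neg at hlt
      have := peo_edge_of_short_walk pB (by omega) hxy.symm
      exact hnxy (pB.adj_of_mem_edges this).symm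
    have hint : ∀ z, z ∈ pA.support → z ∈ pB.support → z = x ∨ z = y := by
      intro z hz1 hz2
      rcases hpAsup z hz1 with hz | hzA
      · simpa using hz
      rcases hpBsup z hz2 with hz | hzB
      · simpa using hz
      exact absurd hzB (hAB z hzA)
    obtain ⟨hcyc, hlen4⟩ := peo_cycle_of_two_paths hxy hnxy pA pB hpA hpB h2A h2B hint
    obtain ⟨u, v, hu, hv, hadj, hne⟩ := hG x (pA.append pB) hcyc hlen4
    rw [Walk.mem_support_append_iff] at hu hv
    have hedges : (pA.append pB).edges = pA.edges ++ pB.edges := Walk.edges_append _ _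
    have hmemA : ∀ t, t ∈ pA.support → t ∉ pB.support → t ∈ A := by
      intro t ht hnt
      rcases hpAsup t ht with h | h
      · exfalso
        rcases (by simpa using h : t = x ∨ t = y) with rfl | rfl
        · exact hnt pB.end_mem_support
        · exact hnt pB.start_mem_support
      · exact h
    have hmemB : ∀ t, t ∈ pB.support → t ∉ pA.support → t ∈ B := by
      intro t ht hnt
      rcases hpBsup t ht with h | h
      · exfalso
        rcases (by simpa using h : t = x ∨ t = y) with rfl | rfl
        · exact hnt pA.start_mem_support
        · exact hnt pA.end_mem_support
      · exact h
    by_cases huA : u ∈ pA.support <;> by_cases hvA : v ∈ pA.support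
    · exact hne (hedges ▸ List.mem_append_left _
        (peo_shortcut _ pA hpAsup hpAmin huA hvA hadj))
    · have hvB : v ∈ pB.support := hv.resolve_left hvA
      have hvB' : v ∈ B := hmemB v hvB hvA
      by_cases huB : u ∈ pB.support
      · exact hne (hedges ▸ List.mem_append_right _
          (peo_shortcut _ pB hpBsup hpBmin huB hvB hadj))
      · have huA' : u ∈ A := hmemA u huA huB
        rcases hclosA u huA' v hadj with h | h
        · exact absurd hvB' (hAB v h)
        · exact absurd h (hBC v hvB')
    · have huB : u ∈ pB.support := hu.resolve_left huA
      have huB' : u ∈ B := hmemB u huB huA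
      by_cases hvB : v ∈ pB.support
      · exact hne (hedges ▸ List.mem_append_right _
          (peo_shortcut _ pB hpBsup hpBmin huB hvB hadj))
      · have hvA' : v ∈ A := hmemA v hvA hvB
        rcases hclosA v hvA' u hadj.symm with h | h
        · exact absurd huB' (hAB u h)
        · exact absurd h (hBC u huB')
    · have huB : u ∈ pB.support := hu.resolve_left huA
      have hvB : v ∈ pB.support := hv.resolve_left hvA
      exact hne (hedges ▸ List.mem_append_right _
        (peo_shortcut _ pB hpBsup hpBmin huB hvB hadj))
  exact ⟨A, B, C, haA, hbB, hAB, hAC, hBC, hclq, hclosA, hclosB⟩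
def SimpleGraph.IsPEO {V : Type*} [Fintype V] (G : SimpleGraph V)
    (e : Fin (Fintype.card V) ≃ V) : Prop :=
  ∀ i : Fin (Fintype.card V),
    (G.induce {x | ∃ j, i ≤ j ∧ e j = x}).IsSimplicialVertex ⟨e i, ⟨i, le_refl i, rfl⟩⟩

lemma peo_isPEO_iff {V : Type*} [Fintype V] (G : SimpleGraph V)
    (e : Fin (Fintype.card V) ≃ V) :
    G.IsPEO e ↔ ∀ i, PeoSimpAt G {x | ∃ j, i ≤ j ∧ e j = x} (e i) :=
  forall_congr' fun i =>
    peo_simplicial_induce_iff G {x | ∃ j, i ≤ j ∧ e j = x} (e i) ⟨i, le_refl i, rfl⟩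

lemma peo_extend {V : Type*} [Fintype V] (G : SimpleGraph V) (S : Set V) (v : V)
    [Fintype ↥({x | x ≠ v} : Set V)]
    (hv : G.IsSimplicialVertex v) (hvS : v ∉ S)
    (e' : Fin (Fintype.card ↥({x | x ≠ v} : Set V)) ≃ ↥({x | x ≠ v} : Set V))
    (hPEO' : (G.induce {x | x ≠ v}).IsPEO e')
    (hcnt' : ∀ i, e' i ∈ ({z : ↥({x | x ≠ v} : Set V) | ↑z ∈ S})ᶜ ↔
      (i : ℕ) < ({z : ↥({x | x ≠ v} : Set V) | ↑z ∈ S})ᶜ.ncard) :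
    ∃ e : Fin (Fintype.card V) ≃ V, G.IsPEO e ∧
      ∀ i : Fin (Fintype.card V), e i ∈ Sᶜ ↔ (i : ℕ) < Sᶜ.ncard := by
  classical
  have hm : Fintype.card V = Fintype.card ↥({x | x ≠ v} : Set V) + 1 := by
    have h1 : Fintype.card V = Fintype.card (Option ↥({x | x ≠ v} : Set V)) :=
      Fintype.card_congr (Equiv.optionSubtypeNe v).symm
    rw [h1, Fintype.card_option]
  set e : Fin (Fintype.card V) ≃ V :=
    (finCongr hm).trans ((finSuccEquiv (Fintype.card ↥({x | x ≠ v} : Set V))).trans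
      ((e'.optionCongr).trans (Equiv.optionSubtypeNe v))) with he
  have he0 : ∀ (h0 : 0 < Fintype.card V), e ⟨0, h0⟩ = v := by
    intro h0
    have h1 : (finCongr hm) ⟨0, h0⟩ = (0 : Fin (Fintype.card ↥({x | x ≠ v} : Set V) + 1)) := by
      ext; simp
    rw [he]
    simp only [Equiv.trans_apply]
    rw [h1]
    simp
    rfl
  have heS : ∀ (j : ℕ) (hj : j < Fintype.card ↥({x | x ≠ v} : Set V))
      (hj' : j + 1 < Fintype.card V), e ⟨j + 1, hj'⟩ = ↑(e' ⟨j, hj⟩) := by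
    intro j hj hj'
    have h1 : (finCongr hm) ⟨j + 1, hj'⟩ = Fin.succ ⟨j, hj⟩ := by
      ext; simp
    rw [he]
    simp only [Equiv.trans_apply]
    rw [h1, finSuccEquiv_succ]
    simp
    rfl
  have hvSc : v ∈ Sᶜ := hvS
  have himg : (Subtype.val '' (({z : ↥({x | x ≠ v} : Set V) | ↑z ∈ S})ᶜ)) = Sᶜ \ {v} := by
    ext x
    simp only [Set.mem_image, Set.mem_compl_iff, Set.mem_setOf_eq, Set.mem_diff,
      Set.mem_singleton_iff]
    constructor
    · rintro ⟨⟨z, hz⟩, hzS, rfl⟩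
      exact ⟨hzS, hz⟩
    · rintro ⟨hxS, hxv⟩
      exact ⟨⟨x, hxv⟩, hxS, rfl⟩
  have hncard : Sᶜ.ncard = (({z : ↥({x | x ≠ v} : Set V) | ↑z ∈ S})ᶜ).ncard + 1 := by
    have h1 : (({z : ↥({x | x ≠ v} : Set V) | ↑z ∈ S})ᶜ).ncard = (Sᶜ \ {v}).ncard := by
      rw [← himg, Set.ncard_image_of_injective _ Subtype.coe_injective]
    rw [h1]
    conv_lhs => rw [show Sᶜ = insert v (Sᶜ \ {v}) by
      rw [Set.insert_diff_singleton, Set.insert_eq_of_mem hvSc]]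
    rw [Set.ncard_insert_of_notMem (fun h => h.2 rfl) ((Sᶜ \ {v}).toFinite)]
  refine ⟨e, ?_, ?_⟩
  · rw [peo_isPEO_iff]
    rintro ⟨iv, hi⟩
    cases iv with
    | zero =>
      rw [he0 hi]
      intro x hx y hy hax hay hne
      exact hv hax hay hne
    | succ j =>
      have hj : j < Fintype.card ↥({x | x ≠ v} : Set V) := by omega
      rw [heS j hj hi]
      intro x hx y hy hax hay hne
      have hget : ∀ z ∈ {x | ∃ jj, (⟨j + 1, hi⟩ : Fin (Fintype.card V)) ≤ jj ∧ e jj = x},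
          ∃ jz : Fin (Fintype.card ↥({x | x ≠ v} : Set V)),
            (⟨j, hj⟩ : Fin (Fintype.card ↥({x | x ≠ v} : Set V))) ≤ jz ∧ ↑(e' jz) = z := by
        rintro z ⟨⟨jjv, hjjv⟩, hle, hez⟩
        rw [Fin.mk_le_mk] at hle
        obtain ⟨jz, rfl⟩ : ∃ jz, jjv = jz + 1 := ⟨jjv - 1, by omega⟩
        have hjz : jz < Fintype.card ↥({x | x ≠ v} : Set V) := by omega
        refine ⟨⟨jz, hjz⟩, by rw [Fin.mk_le_mk]; omega, ?_⟩
        rw [← heS jz hjz hjjv]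
        exact hez
      obtain ⟨jx, hjxle, hjx⟩ := hget x hx
      obtain ⟨jy, hjyle, hjy⟩ := hget y hy
      have hsimp' := (peo_isPEO_iff _ e').mp hPEO' ⟨j, hj⟩
      have hres := hsimp' (e' jx) ⟨jx, hjxle, rfl⟩ (e' jy) ⟨jy, hjyle, rfl⟩
        (by show G.Adj ↑(e' ⟨j, hj⟩) ↑(e' jx); rw [hjx]; exact hax)
        (by show G.Adj ↑(e' ⟨j, hj⟩) ↑(e' jy); rw [hjy]; exact hay)
        (fun hcontra => hne (by rw [← hjx, ← hjy, hcontra]))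
      rw [← hjx, ← hjy]
      exact hres
  · rintro ⟨iv, hi⟩
    cases iv with
    | zero =>
      rw [he0 hi]
      show v ∈ Sᶜ ↔ 0 < Sᶜ.ncard
      rw [hncard]
      exact iff_of_true hvSc (by omega)
    | succ j =>
      have hj : j < Fintype.card ↥({x | x ≠ v} : Set V) := by omega
      rw [heS j hj hi]
      have hcj := hcnt' ⟨j, hj⟩
      show ↑(e' ⟨j, hj⟩) ∈ Sᶜ ↔ j + 1 < Sᶜ.ncard
      rw [hncard]
      have hval : ((⟨j, hj⟩ : Fin (Fintype.card ↥({x | x ≠ v} : Set V))) : ℕ) = j := rfl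
      rw [hval] at hcj
      constructor
      · intro hmem
        have := hcj.mp hmem
        omega
      · intro hlt
        exact hcj.mpr (by omega)
lemma peo_case_full {V : Type*} [Fintype V] (G : SimpleGraph V) (S : Set V)
    (hS : G.IsClique S) (hfull : Sᶜ = ∅) :
    ∃ e : Fin (Fintype.card V) ≃ V, G.IsPEO e ∧
      ∀ i : Fin (Fintype.card V), e i ∈ Sᶜ ↔ (i : ℕ) < Sᶜ.ncard := by
  have huniv : S = Set.univ := by rwa [Set.compl_empty_iff] at hfull
  subst huniv
  refine ⟨(Fintype.equivFin V).symm, ?_, ?_⟩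
  · rw [peo_isPEO_iff]
    intro i x hx y hy hax hay hne
    exact hS (Set.mem_univ x) (Set.mem_univ y) hne
  · intro i
    simp [Set.ncard_empty]

universe u

theorem peo_aux : ∀ (n : ℕ) {V : Type u} [Fintype V] (G : SimpleGraph V),
    Fintype.card V ≤ n → G.IsChordal → ∀ S : Set V, G.IsClique S →
    ∃ e : Fin (Fintype.card V) ≃ V, G.IsPEO e ∧
      ∀ i : Fin (Fintype.card V), e i ∈ Sᶜ ↔ (i : ℕ) < Sᶜ.ncard := by
  intro n
  induction n with
  | zero =>
    intro V _ G hcard hG S hS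
    have : IsEmpty V := Fintype.card_eq_zero_iff.mp (Nat.le_zero.mp hcard)
    exact peo_case_full G S hS (Subsingleton.elim _ _)
  | succ n IH =>
    intro V _ G hcard hG S hS
    classical
    by_cases hfull : Sᶜ = ∅
    · exact peo_case_full G S hS hfull
    · -- find a simplicial vertex outside S
      obtain ⟨v, hvS, hv⟩ : ∃ v, v ∉ S ∧ G.IsSimplicialVertex v := by
        by_cases hcomp : ∀ x y : V, x ≠ y → G.Adj x y
        · obtain ⟨v, hvSc⟩ := Set.nonempty_iff_ne_empty.mpr hfull
          exact ⟨v, hvSc, fun x hx y hy hne => hcomp x y hne⟩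
        · push_neg at hcomp
          obtain ⟨a, b, hab, hnadj⟩ := hcomp
          obtain ⟨A, B, C, haA, hbB, hAB, hAC, hBC, hclq, hclosA, hclosB⟩ :=
            peo_separator hG hab hnadj
          have find_in : ∀ (X : Set V) (x0 : V), x0 ∈ X → (∀ z ∈ X, z ∉ C) →
              (∀ z ∈ X, ∀ u, G.Adj z u → u ∈ X ∪ C) → (∃ w, w ∉ X ∪ C) →
              ∃ u, u ∈ X ∧ G.IsSimplicialVertex u := by
            intro X x0 hx0 hXC hclos hnotin
            haveI : Fintype ↥(X ∪ C) := Fintype.ofFinite _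
            have hsmall : Fintype.card ↥(X ∪ C) ≤ n := by
              obtain ⟨w, hw⟩ := hnotin
              have hlt : Fintype.card ↥(X ∪ C) < Fintype.card V :=
                Fintype.card_lt_of_injective_of_notMem _ Subtype.coe_injective
                  (b := w) (by rwa [Subtype.range_coe])
              omega
            have hG' := peo_chordal_induce hG (X ∪ C)
            have hclq' : (G.induce (X ∪ C)).IsClique {z : ↥(X ∪ C) | ↑z ∈ C} := by
              intro z1 hz1 z2 hz2 hne
              show G.Adj ↑z1 ↑z2
              exact hclq hz1 hz2 (fun h => hne (Subtype.ext h))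
            obtain ⟨eA, hPEOA, hcntA⟩ := IH (G.induce (X ∪ C)) hsmall hG' _ hclq'
            have hpos : 0 < Fintype.card ↥(X ∪ C) :=
              Fintype.card_pos_iff.mpr ⟨⟨x0, Or.inl hx0⟩⟩
            set i0 : Fin (Fintype.card ↥(X ∪ C)) := ⟨0, hpos⟩ with hi0
            set u0 := eA i0 with hu0def
            have h0lt : 0 < ({z : ↥(X ∪ C) | ↑z ∈ C}ᶜ).ncard :=
              (Set.ncard_pos (Set.toFinite _)).mpr ⟨⟨x0, Or.inl hx0⟩, hXC x0 hx0⟩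
            have hu0c : u0 ∈ ({z : ↥(X ∪ C) | ↑z ∈ C}ᶜ) := (hcntA i0).mpr h0lt
            have hu0X : ↑u0 ∈ X := by
              rcases u0.2 with h | h
              · exact h
              · exact absurd h hu0c
            have hsimp := (peo_isPEO_iff _ eA).mp hPEOA i0
            refine ⟨↑u0, hu0X, ?_⟩
            intro x hx y hy hne
            have hax : G.Adj ↑u0 x := hx
            have hay : G.Adj ↑u0 y := hy
            have hxD : x ∈ X ∪ C := hclos ↑u0 hu0X x hax
            have hyD : y ∈ X ∪ C := hclos ↑u0 hu0X y hay
            have hmem : ∀ (z : ↥(X ∪ C)), z ∈ {z : ↥(X ∪ C) | ∃ j, i0 ≤ j ∧ eA j = z} := by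
              intro z
              exact ⟨eA.symm z, by rw [Fin.le_def]; exact Nat.zero_le _,
                eA.apply_symm_apply z⟩
            have hres := hsimp ⟨x, hxD⟩ (hmem _) ⟨y, hyD⟩ (hmem _)
              (by show G.Adj ↑u0 x; exact hax) (by show G.Adj ↑u0 y; exact hay)
              (fun h => hne (congrArg Subtype.val h))
            exact hres
          obtain ⟨u0, hu0A, hsimp0⟩ := find_in A a haA hAC hclosA
            ⟨b, by
              rintro (h | h)
              · exact hAB b h hbB
              · exact hBC b hbB h⟩
          obtain ⟨u1, hu1B, hsimp1⟩ := find_in B b hbB hBC hclosB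
            ⟨a, by
              rintro (h | h)
              · exact hAB a haA h
              · exact hAC a haA h⟩
          have hnadj01 : ¬ G.Adj u0 u1 := by
            intro h
            rcases hclosA u0 hu0A u1 h with h' | h'
            · exact hAB u1 h' hu1B
            · exact hBC u1 hu1B h'
          have hne01 : u0 ≠ u1 := by
            rintro rfl
            exact hAB u0 hu0A hu1B
          by_cases hu0S : u0 ∈ S
          · refine ⟨u1, fun hu1S => ?_, hsimp1⟩
            exact hnadj01 (hS hu0S hu1S hne01)
          · exact ⟨u0, hu0S, hsimp0⟩
      haveI : Fintype ↥({x | x ≠ v} : Set V) := Fintype.ofFinite _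
      have hm : Fintype.card ↥({x | x ≠ v} : Set V) + 1 = Fintype.card V := by
        have h1 : Fintype.card V = Fintype.card (Option ↥({x | x ≠ v} : Set V)) :=
          Fintype.card_congr (Equiv.optionSubtypeNe v).symm
        rw [h1, Fintype.card_option]
      have hcard' : Fintype.card ↥({x | x ≠ v} : Set V) ≤ n := by omega
      have hG' := peo_chordal_induce hG {x | x ≠ v}
      have hS' : (G.induce {x | x ≠ v}).IsClique {z : ↥({x | x ≠ v} : Set V) | ↑z ∈ S} := by
        intro z1 hz1 z2 hz2 hne
        show G.Adj ↑z1 ↑z2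
        exact hS hz1 hz2 (fun h => hne (Subtype.ext h))
      obtain ⟨e', hPEO', hcnt'⟩ := IH (G.induce {x | x ≠ v}) hcard' hG' _ hS'
      exact peo_extend G S v hv hvS e' hPEO' hcnt'

theorem chordal_peo_ending_with_clique {V : Type*} [Fintype V] (G : SimpleGraph V)
    (hG : G.IsChordal) (S : Set V) (hS : G.IsClique S) :
    ∃ e : Fin (Fintype.card V) ≃ V, G.IsPEO e ∧
      ∀ i : Fin (Fintype.card V), e i ∈ Sᶜ ↔ (i : ℕ) < Sᶜ.ncard := by
  exact peo_aux (Fintype.card V) G le_rfl hG S hS
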